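/- Under the inharmonic hypothesis, let L be an integer with K ≤ L ≤ K+1. Then for every ω ∈ [ω̃₀ − ‖Δ‖∞, ω̃₀ + ‖Δ‖∞], the transport cost satisfies q_L(ω) = 2π·Σ_{k=1}^K a_k²·(k·(ω − ω̃₀) − Δ_k)². -/

import Mathlib

open Finset

/-- The optimal-transport cost `q_L(ω) = 2π·Σ_{k=1}^K a_k²·min_{ℓ∈{1,…,L}} (ℓω − ω_k)²`. -/
noncomputable def qcost (K L : ℕ) (hL : 1 ≤ L) (a ω : ℕ → ℝ) (x : ℝ) : ℝ :=
  2 * Real.pi * ∑ k ∈ Finset.Icc 1 K, (a k) ^ 2 *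
    (Finset.Icc 1 L).inf' (Finset.nonempty_Icc.mpr hL)
      (fun ℓ => ((ℓ : ℝ) * x - ω k) ^ 2)

set_option maxHeartbeats 1000000 in
/-- under the inharmonic hypothesis, for `K ≤ L ≤ K+1` and every
`ω ∈ [ω̃₀ − ‖Δ‖∞, ω̃₀ + ‖Δ‖∞]`, the transport cost satisfies
`q_L(ω) = 2π·Σ_{k=1}^K a_k²·(k·(ω − ω̃₀) − Δ_k)²`. -/
theorem stmt_6 (K : ℕ) (hK : 1 ≤ K) (a ω Δ : ℕ → ℝ)
    (ha : ∀ k ∈ Finset.Icc 1 K, 0 < a k)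
    (ω₀' : ℝ) (hω₀' : 0 < ω₀')
    (hfreq : ∀ k ∈ Finset.Icc 1 K, ω k = (k : ℝ) * ω₀' + Δ k)
    (hΔ : (Finset.Icc 1 K).sup' (Finset.nonempty_Icc.mpr hK) (fun k => |Δ k|)
          < ω₀' / (2 * (K : ℝ) + 3))
    (L : ℕ) (hL₁ : K ≤ L) (hL₂ : L ≤ K + 1) :
    ∀ x : ℝ,
      x ∈ Set.Icc
        (ω₀' - (Finset.Icc 1 K).sup' (Finset.nonempty_Icc.mpr hK) (fun k => |Δ k|))
        (ω₀' + (Finset.Icc 1 K).sup' (Finset.nonempty_Icc.mpr hK) (fun k => |Δ k|)) →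
      qcost K L (hK.trans hL₁) a ω x =
        2 * Real.pi * ∑ k ∈ Finset.Icc 1 K,
          (a k) ^ 2 * ((k : ℝ) * (x - ω₀') - Δ k) ^ 2 := by
  intro x hx
  set δ := (Finset.Icc 1 K).sup' (Finset.nonempty_Icc.mpr hK) (fun k => |Δ k|) with hδdef
  have h1K : (1 : ℕ) ∈ Finset.Icc 1 K := Finset.mem_Icc.mpr ⟨le_refl 1, hK⟩
  have hδ0 : 0 ≤ δ := le_trans (abs_nonneg _) (Finset.le_sup' (fun k => |Δ k|) h1K)
  obtain ⟨hx1, hx2⟩ := hx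
  have he1 : -δ ≤ x - ω₀' := by linarith
  have he2 : x - ω₀' ≤ δ := by linarith
  have h3 : (0:ℝ) < 2 * (K:ℝ) + 3 := by positivity
  have hδω : δ * (2 * (K:ℝ) + 3) < ω₀' := by
    have := mul_lt_mul_of_pos_right hΔ h3
    rwa [div_mul_cancel₀ _ (ne_of_gt h3)] at this
  unfold qcost
  congr 1
  apply Finset.sum_congr rfl
  intro k hk
  congr 1
  obtain ⟨hk1, hkK⟩ := Finset.mem_Icc.mp hk
  have hΔ1 : -δ ≤ Δ k := by
    have := Finset.le_sup' (fun k => |Δ k|) hk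
    have := abs_le.mp this
    linarith [(abs_le.mp (le_refl |Δ k|)).1, neg_abs_le (Δ k)]
  have hΔ2 : Δ k ≤ δ := le_trans (le_abs_self _) (Finset.le_sup' (fun k => |Δ k|) hk)
  have hΔ1' : -δ ≤ Δ k := le_trans (neg_le_neg (Finset.le_sup' (fun k => |Δ k|) hk)) (neg_abs_le _)
  have hωk := hfreq k hk
  have hkL : k ∈ Finset.Icc 1 L := Finset.mem_Icc.mpr ⟨hk1, hkK.trans hL₁⟩
  have hkR : (k:ℝ) ≤ K := Nat.cast_le.mpr hkK
  have hk0 : (0:ℝ) ≤ (k:ℝ) := Nat.cast_nonneg k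
  have hfk : ((k:ℝ)*x - ω k)^2 = ((k:ℝ)*(x-ω₀') - Δ k)^2 := by rw [hωk]; ring
  apply le_antisymm
  · exact le_of_le_of_eq (Finset.inf'_le _ hkL) hfk
  · apply Finset.le_inf'
    intro ℓ hℓ
    obtain ⟨hℓ1, hℓL⟩ := Finset.mem_Icc.mp hℓ
    by_cases hne : ℓ = k
    · subst hne; exact le_of_eq hfk.symm
    · have hℓR : (ℓ:ℝ) ≤ (K:ℝ) + 1 := by
        have : ℓ ≤ K + 1 := hℓL.trans hL₂
        exact_mod_cast this
      have hℓ0 : (0:ℝ) ≤ (ℓ:ℝ) := Nat.cast_nonneg ℓ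
      -- |A| ≤ (K+1)δ
      have hA : |(k:ℝ)*(x-ω₀') - Δ k| ≤ ((K:ℝ)+1)*δ := by
        rw [abs_le]
        constructor <;>
          nlinarith [mul_nonneg hk0 (by linarith : (0:ℝ) ≤ δ - (x - ω₀')),
            mul_nonneg hk0 (by linarith : (0:ℝ) ≤ δ + (x - ω₀')),
            mul_nonneg (by linarith : (0:ℝ) ≤ (K:ℝ) - k) hδ0]
      -- |ℓ - k| ≥ 1
      have h1 : (1:ℝ) ≤ |(ℓ:ℝ) - (k:ℝ)| := by
        have hz : (ℓ:ℤ) - (k:ℤ) ≠ 0 := sub_ne_zero.mpr (by exact_mod_cast hne)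
        have := Int.one_le_abs hz
        have : ((1:ℤ):ℝ) ≤ ((|(ℓ:ℤ) - (k:ℤ)|:ℤ):ℝ) := by exact_mod_cast this
        push_cast at this
        convert this using 2 <;> push_cast <;> ring
      -- |ℓe - Δk| ≤ (K+2)δ
      have hC : |(ℓ:ℝ)*(x-ω₀') - Δ k| ≤ ((K:ℝ)+2)*δ := by
        rw [abs_le]
        constructor <;>
          nlinarith [mul_nonneg hℓ0 (by linarith : (0:ℝ) ≤ δ - (x - ω₀')),
            mul_nonneg hℓ0 (by linarith : (0:ℝ) ≤ δ + (x - ω₀')),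
            mul_nonneg (by linarith : (0:ℝ) ≤ (K:ℝ) + 1 - ℓ) hδ0]
      have hBeq : (ℓ:ℝ)*x - ω k = ((ℓ:ℝ) - (k:ℝ))*ω₀' + ((ℓ:ℝ)*(x-ω₀') - Δ k) := by
        rw [hωk]; ring
      have hB : ((K:ℝ)+1)*δ ≤ |(ℓ:ℝ)*x - ω k| := by
        have habs : |((ℓ:ℝ) - (k:ℝ))*ω₀'| - |-( (ℓ:ℝ)*(x-ω₀') - Δ k)| ≤ |(ℓ:ℝ)*x - ω k| := by
          have h := abs_sub_abs_le_abs_sub (((ℓ:ℝ) - (k:ℝ))*ω₀') (-((ℓ:ℝ)*(x-ω₀') - Δ k))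
          rw [hBeq]
          convert h using 2
          all_goals first | rfl | ring
        rw [abs_neg, abs_mul, abs_of_pos hω₀'] at habs
        have hω1 : ω₀' ≤ |(ℓ:ℝ) - (k:ℝ)| * ω₀' := by
          nlinarith
        linarith
      have := pow_le_pow_left₀ (abs_nonneg _) (hA.trans hB) 2
      rwa [sq_abs, sq_abs] at this
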